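/- (Proposition 2, inequality form.) Let S be a real symmetric matrix indexed by ι = Fin q ⊕ Fin q, let λ₂ ≥ 0 and suppose λ₁ ≥ |S (inl i) (inr j)| for all i, j ∈ Fin q. Then for every positive definite symmetric real matrix Θ indexed by ι, the block-diagonal matrix Θ̄ := fromBlocks Θ_LL 0 0 Θ_RR (obtained from Θ by setting the off-diagonal blocks Θ_LR and Θ_RL to zero) is positive definite and L(Θ̄) ≤ L(Θ). -/

import Mathlib

open Matrix Sum

/-- The swap permutation matrix `J = fromBlocks 0 I I 0` on `Fin q ⊕ Fin q`. -/
noncomputable def Jswap (q : ℕ) : Matrix (Fin q ⊕ Fin q) (Fin q ⊕ Fin q) ℝ :=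
  Matrix.fromBlocks 0 1 1 0

/-- Entrywise ℓ1 norm of a real matrix. -/
noncomputable def l1norm {m n : Type*} [Fintype m] [Fintype n] (A : Matrix m n ℝ) : ℝ :=
  ∑ i, ∑ j, |A i j|

/-- The pdglasso objective
`L(Θ) = -log det Θ + tr(SΘ) + λ₁‖Θ‖₁ + λ₂(‖Θ_LL - Θ_RR‖₁ + ‖Θ_LR - Θ_RL‖₁)`. -/
noncomputable def pdObjective {q : ℕ} (S : Matrix (Fin q ⊕ Fin q) (Fin q ⊕ Fin q) ℝ)
    (l1 l2 : ℝ) (Θ : Matrix (Fin q ⊕ Fin q) (Fin q ⊕ Fin q) ℝ) : ℝ :=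
  -Real.log Θ.det + (S * Θ).trace + l1 * l1norm Θ
    + l2 * (l1norm (Θ.toBlocks₁₁ - Θ.toBlocks₂₂) + l1norm (Θ.toBlocks₁₂ - Θ.toBlocks₂₁))

set_option linter.unusedSectionVars false

section Helpers

variable {m n : Type*} [Fintype m] [DecidableEq m] [Fintype n] [DecidableEq n]

lemma one_le_det_one_add' {M : Matrix n n ℝ} (hM : M.PosSemidef) :
    1 ≤ (1 + M).det := by
  have h1 : (1 + M).PosSemidef := Matrix.PosSemidef.add (Matrix.PosSemidef.one) hM
  have hH : (1 + M).IsHermitian := h1.1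
  have hev : ∀ i, 1 ≤ hH.eigenvalues i := by
    intro i
    set v : n → ℝ := (WithLp.equiv 2 (n → ℝ)) (hH.eigenvectorBasis i) with hv
    have hnorm : ‖hH.eigenvectorBasis i‖ = 1 := hH.eigenvectorBasis.orthonormal.1 i
    have hvv : dotProduct (star v) v = 1 := by
      have h2 : (dotProduct (star v) v) = ‖hH.eigenvectorBasis i‖ ^ 2 := by
        rw [← real_inner_self_eq_norm_sq, EuclideanSpace.inner_eq_star_dotProduct]
        exact dotProduct_comm _ _
      rw [h2, hnorm, one_pow]
    have heig := hH.eigenvalues_eq i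
    rw [heig]
    have hMnn := hM.dotProduct_mulVec_nonneg (hH.eigenvectorBasis i).ofLp
    simp only [add_mulVec, one_mulVec, dotProduct_add] at *
    simp only [RCLike.re_to_real]
    rw [show star (hH.eigenvectorBasis i).ofLp ⬝ᵥ (hH.eigenvectorBasis i).ofLp = 1 from hvv]
    linarith
  have hdet : (1 + M).det = ∏ i, hH.eigenvalues i := by
    simpa using hH.det_eq_prod_eigenvalues
  rw [hdet]
  calc (1:ℝ) = ∏ _i : n, 1 := by simp
    _ ≤ ∏ i, hH.eigenvalues i :=
      Finset.prod_le_prod (fun i _ => zero_le_one) (fun i _ => hev i)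

open scoped MatrixOrder in
lemma det_le_det_add' {S P : Matrix n n ℝ} (hS : S.PosSemidef) (hdet : 0 < S.det)
    (hP : P.PosSemidef) : S.det ≤ (S + P).det := by
  set Q := CFC.sqrt S with hQdef
  have hQ : Q.PosSemidef := nonneg_iff_posSemidef.mp (CFC.sqrt_nonneg S)
  have hQQ : Q * Q = S := CFC.sqrt_mul_sqrt_self S (nonneg_iff_posSemidef.mpr hS)
  have hQdet : Q.det * Q.det = S.det := by rw [← det_mul, hQQ]
  have hQd : Q.det ≠ 0 := by
    intro h; rw [h, mul_zero] at hQdet; exact hdet.ne' hQdet.symm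
  have h1 : Q * Q⁻¹ = 1 := mul_nonsing_inv _ (isUnit_iff_ne_zero.2 hQd)
  have h2 : Q⁻¹ * Q = 1 := nonsing_inv_mul _ (isUnit_iff_ne_zero.2 hQd)
  have hQH : Q⁻¹ᴴ = Q⁻¹ := by rw [conjTranspose_nonsing_inv, hQ.1.eq]
  have hMps : (Q⁻¹ * P * Q⁻¹).PosSemidef := by
    have := hP.conjTranspose_mul_mul_same Q⁻¹
    rwa [hQH] at this
  have key : S + P = Q * (1 + Q⁻¹ * P * Q⁻¹) * Q := by
    rw [mul_add, add_mul, mul_one, hQQ]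
    congr 1
    symm
    calc Q * (Q⁻¹ * P * Q⁻¹) * Q = (Q * Q⁻¹) * P * (Q⁻¹ * Q) := by
          simp only [Matrix.mul_assoc]
      _ = P := by rw [h1, h2, one_mul, mul_one]
  rw [key, det_mul, det_mul]
  have h1le := one_le_det_one_add' hMps
  nlinarith [hQdet, hdet]

lemma posDef_toBlocks₁₁' {Θ : Matrix (m ⊕ n) (m ⊕ n) ℝ} (hΘ : Θ.PosDef) :
    Θ.toBlocks₁₁.PosDef := by
  refine PosDef.of_dotProduct_mulVec_pos ?_ ?_
  · ext i j
    simpa [toBlocks₁₁] using congrFun (congrFun hΘ.1 (inl i)) (inl j)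
  · intro x hx
    have hx' : (Sum.elim x 0 : m ⊕ n → ℝ) ≠ 0 := by
      intro h; apply hx; ext i; exact congrFun h (inl i)
    have h := hΘ.dotProduct_mulVec_pos hx'
    rw [← fromBlocks_toBlocks Θ, fromBlocks_mulVec] at h
    simp only [Sum.elim_comp_inl, Sum.elim_comp_inr, mulVec_zero, add_zero,
      dotProduct_block, star_trivial] at h ⊢
    simpa using h

lemma posDef_toBlocks₂₂' {Θ : Matrix (m ⊕ n) (m ⊕ n) ℝ} (hΘ : Θ.PosDef) :
    Θ.toBlocks₂₂.PosDef := by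
  refine PosDef.of_dotProduct_mulVec_pos ?_ ?_
  · ext i j
    simpa [toBlocks₂₂] using congrFun (congrFun hΘ.1 (inr i)) (inr j)
  · intro x hx
    have hx' : (Sum.elim 0 x : m ⊕ n → ℝ) ≠ 0 := by
      intro h; apply hx; ext i; exact congrFun h (inr i)
    have h := hΘ.dotProduct_mulVec_pos hx'
    rw [← fromBlocks_toBlocks Θ, fromBlocks_mulVec] at h
    simp only [Sum.elim_comp_inl, Sum.elim_comp_inr, mulVec_zero, zero_add,
      dotProduct_block, star_trivial] at h ⊢
    simpa using h

lemma posDef_fromBlocks_diag' {A : Matrix m m ℝ} {D : Matrix n n ℝ}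
    (hA : A.PosDef) (hD : D.PosDef) : (fromBlocks A 0 0 D).PosDef := by
  refine PosDef.of_dotProduct_mulVec_pos ?_ ?_
  · unfold Matrix.IsHermitian
    ext (i | i) (j | j)
    · simpa using congrFun (congrFun hA.1 i) j
    · simp
    · simp
    · simpa using congrFun (congrFun hD.1 i) j
  · intro x hx
    have hsplit : dotProduct (star x) ((fromBlocks A 0 0 D) *ᵥ x)
        = dotProduct (star (x ∘ inl)) (A *ᵥ (x ∘ inl))
          + dotProduct (star (x ∘ inr)) (D *ᵥ (x ∘ inr)) := by
      rw [fromBlocks_mulVec]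
      simp [dotProduct_block, star_trivial]
    rw [hsplit]
    have hcases : x ∘ inl ≠ 0 ∨ x ∘ inr ≠ 0 := by
      by_contra h
      push_neg at h
      apply hx
      ext (i | i)
      · exact congrFun h.1 i
      · exact congrFun h.2 i
    rcases hcases with h | h
    · exact add_pos_of_pos_of_nonneg (hA.dotProduct_mulVec_pos h) (hD.posSemidef.dotProduct_mulVec_nonneg _)
    · exact add_pos_of_nonneg_of_pos (hA.posSemidef.dotProduct_mulVec_nonneg _) (hD.dotProduct_mulVec_pos h)

lemma fischer' {Θ : Matrix (m ⊕ n) (m ⊕ n) ℝ} (hΘ : Θ.PosDef) :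
    Θ.det ≤ Θ.toBlocks₁₁.det * Θ.toBlocks₂₂.det := by
  set A := Θ.toBlocks₁₁ with hAdef
  set B := Θ.toBlocks₁₂ with hBdef
  set C := Θ.toBlocks₂₁ with hCdef
  set D := Θ.toBlocks₂₂ with hDdef
  have hA : A.PosDef := posDef_toBlocks₁₁' hΘ
  have hD : D.PosDef := posDef_toBlocks₂₂' hΘ
  haveI : Invertible A := invertibleOfIsUnitDet A hA.det_pos.ne'.isUnit
  have hCB : C = Bᴴ := by
    ext i j
    simpa [hCdef, hBdef, toBlocks₂₁, toBlocks₁₂] using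
      (congrFun (congrFun hΘ.1 (inr i)) (inl j)).symm
  have hdetΘ : Θ.det = A.det * (D - Bᴴ * A⁻¹ * B).det := by
    conv_lhs => rw [← fromBlocks_toBlocks Θ]
    rw [← hAdef, ← hBdef, ← hCdef, ← hDdef, hCB, det_fromBlocks₁₁, invOf_eq_nonsing_inv]
  have hps : (D - Bᴴ * A⁻¹ * B).PosSemidef := by
    rw [← Matrix.PosDef.fromBlocks₁₁ B D hA, ← hCB]
    rw [hAdef, hBdef, hCdef, hDdef, fromBlocks_toBlocks]
    exact hΘ.posSemidef
  have hsdet : 0 < (D - Bᴴ * A⁻¹ * B).det := by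
    have h := hΘ.det_pos
    rw [hdetΘ] at h
    rcases mul_pos_iff.mp h with ⟨_, h'⟩ | ⟨h', _⟩
    · exact h'
    · linarith [hA.det_pos]
  have hP : (Bᴴ * A⁻¹ * B).PosSemidef :=
    hA.inv.posSemidef.conjTranspose_mul_mul_same B
  have hDd : (D - Bᴴ * A⁻¹ * B) + (Bᴴ * A⁻¹ * B) = D := sub_add_cancel _ _
  have hle := det_le_det_add' hps hsdet hP
  rw [hDd] at hle
  rw [hdetΘ]
  exact mul_le_mul_of_nonneg_left hle hA.det_pos.le

end Helpers

section MoreHelpers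

variable {m n l o : Type*} [Fintype m] [Fintype n] [Fintype l] [Fintype o]

lemma l1norm_nonneg' (A : Matrix m n ℝ) : 0 ≤ l1norm A :=
  Finset.sum_nonneg fun _ _ => Finset.sum_nonneg fun _ _ => abs_nonneg _

lemma l1norm_zero' : l1norm (0 : Matrix m n ℝ) = 0 := by simp [l1norm]

lemma l1norm_fromBlocks' (A : Matrix m l ℝ) (B : Matrix m o ℝ) (C : Matrix n l ℝ)
    (D : Matrix n o ℝ) :
    l1norm (fromBlocks A B C D) = l1norm A + l1norm B + l1norm C + l1norm D := by
  simp only [l1norm, Fintype.sum_sum_type, fromBlocks_apply₁₁, fromBlocks_apply₁₂,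
    fromBlocks_apply₂₁, fromBlocks_apply₂₂, Finset.sum_add_distrib]
  ring

lemma neg_trace_bound' {ι : Type*} [Fintype ι] (S N : Matrix ι ι ℝ) (c : ℝ)
    (h : ∀ i j, N j i ≠ 0 → |S i j| ≤ c) :
    -(c * l1norm N) ≤ (S * N).trace := by
  have htr : (S * N).trace = ∑ i, ∑ j, S i j * N j i := by
    simp [Matrix.trace, Matrix.mul_apply, Matrix.diag]
  have habs : |(S * N).trace| ≤ c * l1norm N := by
    rw [htr]
    calc |∑ i, ∑ j, S i j * N j i| ≤ ∑ i, |∑ j, S i j * N j i| :=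
          Finset.abs_sum_le_sum_abs _ _
      _ ≤ ∑ i, ∑ j, |S i j * N j i| :=
          Finset.sum_le_sum fun i _ => Finset.abs_sum_le_sum_abs _ _
      _ ≤ ∑ i, ∑ j, c * |N j i| := by
          refine Finset.sum_le_sum fun i _ => Finset.sum_le_sum fun j _ => ?_
          rw [abs_mul]
          by_cases hN : N j i = 0
          · simp [hN]
          · exact mul_le_mul_of_nonneg_right (h i j hN) (abs_nonneg _)
      _ = c * l1norm N := by
          rw [Finset.sum_comm]
          simp [l1norm, Finset.mul_sum]
  linarith [neg_abs_le ((S * N).trace)]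

end MoreHelpers

/-- Proposition 2, inequality form: if `λ₁ ≥ |s_{i j'}|` for all across-block
pairs, then for every positive definite symmetric `Θ`, the block-diagonal truncation
`fromBlocks Θ_LL 0 0 Θ_RR` is positive definite and does not increase the objective. -/
theorem pdglasso_blockdiagonal_decreases_objective (q : ℕ) (hq : 0 < q)
    (S : Matrix (Fin q ⊕ Fin q) (Fin q ⊕ Fin q) ℝ) (hS : S.IsSymm)
    (l1 l2 : ℝ) (hl2 : 0 ≤ l2)
    (hl1 : ∀ i j : Fin q, |S (inl i) (inr j)| ≤ l1)
    (Θ : Matrix (Fin q ⊕ Fin q) (Fin q ⊕ Fin q) ℝ) (hΘ : Θ.PosDef) (hΘs : Θ.IsSymm) :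
    (Matrix.fromBlocks Θ.toBlocks₁₁ 0 0 Θ.toBlocks₂₂).PosDef ∧
      pdObjective S l1 l2 (Matrix.fromBlocks Θ.toBlocks₁₁ 0 0 Θ.toBlocks₂₂)
        ≤ pdObjective S l1 l2 Θ := by
  have hA := posDef_toBlocks₁₁' hΘ
  have hD := posDef_toBlocks₂₂' hΘ
  refine ⟨posDef_fromBlocks_diag' hA hD, ?_⟩
  simp only [pdObjective, toBlocks_fromBlocks₁₁, toBlocks_fromBlocks₁₂,
    toBlocks_fromBlocks₂₁, toBlocks_fromBlocks₂₂]
  set A := Θ.toBlocks₁₁ with hAdef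
  set B := Θ.toBlocks₁₂ with hBdef
  set C := Θ.toBlocks₂₁ with hCdef
  set D := Θ.toBlocks₂₂ with hDdef
  have hΘblocks : Θ = fromBlocks A B C D := (fromBlocks_toBlocks Θ).symm
  have hl1nn : 0 ≤ l1 := le_trans (abs_nonneg _) (hl1 ⟨0, hq⟩ ⟨0, hq⟩)
  -- log part
  have hdetbar : (fromBlocks A 0 0 D).det = A.det * D.det := det_fromBlocks_zero₂₁ _ _ _
  have hfis : Θ.det ≤ (fromBlocks A 0 0 D).det := by
    rw [hdetbar]; exact fischer' hΘ
  have hlog : Real.log Θ.det ≤ Real.log (fromBlocks A 0 0 D).det :=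
    Real.log_le_log hΘ.det_pos hfis
  -- trace part
  have hbarEq : (fromBlocks A 0 0 D : Matrix (Fin q ⊕ Fin q) (Fin q ⊕ Fin q) ℝ)
      = Θ - fromBlocks 0 B C 0 := by
    rw [hΘblocks]
    ext (i | i) (j | j) <;> simp
  have e3 : (S * fromBlocks A 0 0 D).trace
      = (S * Θ).trace - (S * fromBlocks 0 B C 0).trace := by
    rw [hbarEq, mul_sub, trace_sub]
  have hNbound : -(l1 * l1norm (fromBlocks (0 : Matrix (Fin q) (Fin q) ℝ) B C 0))
      ≤ (S * fromBlocks 0 B C 0).trace := by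
    refine neg_trace_bound' _ _ _ ?_
    rintro (i | i) (j | j) hN
    · exfalso; apply hN; simp
    · exact hl1 i j
    · have h' : S (inr i) (inl j) = S (inl j) (inr i) :=
        congrFun (congrFun hS (inl j)) (inr i)
      rw [h']; exact hl1 j i
    · exfalso; apply hN; simp
  have e4 : l1norm (fromBlocks (0 : Matrix (Fin q) (Fin q) ℝ) B C 0)
      = l1norm B + l1norm C := by
    rw [l1norm_fromBlocks', l1norm_zero']; ring
  -- l1 part
  have e1 : l1norm (fromBlocks A (0 : Matrix (Fin q) (Fin q) ℝ) 0 D)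
      = l1norm A + l1norm D := by
    rw [l1norm_fromBlocks', l1norm_zero']; ring
  have e2 : l1norm Θ = l1norm A + l1norm B + l1norm C + l1norm D := by
    rw [hΘblocks, l1norm_fromBlocks']
  -- l2 part
  have e5 : l1norm ((0 : Matrix (Fin q) (Fin q) ℝ) - 0) = 0 := by
    rw [sub_zero, l1norm_zero']
  have h6 : 0 ≤ l2 * l1norm (B - C) := mul_nonneg hl2 (l1norm_nonneg' _)
  have h7 : 0 ≤ l1norm B := l1norm_nonneg' _
  have h8 : 0 ≤ l1norm C := l1norm_nonneg' _
  rw [e5, e3, e1, e2]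
  rw [e4] at hNbound
  nlinarith [hlog, hNbound, h6, h7, h8, hl1nn,
    mul_le_mul_of_nonneg_left (le_refl (l1norm B + l1norm C)) hl1nn]
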